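/- Let D_n = (p_n, e_n, m_n) be the polarization process of the three-message quantized decoder (each step applies the variable-node or check-node transform with probability 1/2 each). Define F_n = p_n - 4√(p_n·m_n). Then (F_n) is a submartingale: E[F_{n+1} | D_n] ≥ F_n. -/

import Mathlib

open MeasureTheory ProbabilityTheory

/-- Potential function `F(p,e,m) = p - 4√(pm)`. -/
noncomputable def Fpot (d : ℝ × ℝ × ℝ) : ℝ := d.1 - 4 * Real.sqrt (d.1 * d.2.2)

/-- Variable-node transform of a ternary density `(p,e,m)`. -/
def vplus (d : ℝ × ℝ × ℝ) : ℝ × ℝ × ℝ :=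
  (d.1^2 + 2*d.1*d.2.1, d.2.1^2 + 2*d.1*d.2.2, d.2.2^2 + 2*d.2.1*d.2.2)

/-- Check-node transform of a ternary density `(p,e,m)`. -/
def vminus (d : ℝ × ℝ × ℝ) : ℝ × ℝ × ℝ :=
  (d.1^2 + d.2.2^2, 1 - (1 - d.2.1)^2, 2*d.1*d.2.2)

lemma key_poly' (u v : ℝ) (hu : 0 ≤ u) (hv : 0 ≤ v) :
    8*u^2*v^2*(u^4+v^4) ≤ (3*u*v*(u^2+v^2) + v^4/2 - u^2*v^2)^2 := by
  nlinarith [mul_nonneg (sq_nonneg v) (sq_nonneg (u^3-3*u^2*v)),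
    mul_nonneg (mul_nonneg hu (pow_nonneg hv 3)) (pow_nonneg hv 4),
    mul_nonneg (mul_nonneg (pow_nonneg hu 4) (sq_nonneg v)) (mul_nonneg hu hv),
    mul_nonneg (mul_nonneg (mul_nonneg hu (pow_nonneg hv 4)) (mul_nonneg hu hv)) (sq_nonneg (u-v)),
    mul_nonneg (mul_nonneg (sq_nonneg v) (pow_nonneg hv 3)) (mul_nonneg hu (sq_nonneg (u-v))),
    sq_nonneg (v^4)]

lemma key_L_nonneg' (u v : ℝ) (hu : 0 ≤ u) (hv : 0 ≤ v) :
    0 ≤ 3*u*v*(u^2+v^2) + v^4/2 - u^2*v^2 := by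
  nlinarith [mul_nonneg (mul_nonneg hu hv) (sq_nonneg (u-v)),
    mul_nonneg (mul_nonneg hu hv) (mul_nonneg hu hv), sq_nonneg (v^2)]

lemma key2' (p m : ℝ) (hp : 0 ≤ p) (hm : 0 ≤ m) :
    2 * Real.sqrt (p*m) * Real.sqrt (2*(p^2+m^2)) ≤ m^2/2 - p*m + 3*Real.sqrt (p*m)*(p+m) := by
  set u := Real.sqrt p with hud
  set v := Real.sqrt m with hvd
  have hu : 0 ≤ u := Real.sqrt_nonneg p
  have hv : 0 ≤ v := Real.sqrt_nonneg m
  have hp' : p = u^2 := by rw [hud, Real.sq_sqrt hp]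
  have hm' : m = v^2 := by rw [hvd, Real.sq_sqrt hm]
  have hs : Real.sqrt (p*m) = u*v := by rw [Real.sqrt_mul hp]
  rw [hs, hp', hm']
  have h1 : 2*(u*v) * Real.sqrt (2*((u^2)^2+(v^2)^2)) = Real.sqrt (8*u^2*v^2*(u^4+v^4)) := by
    rw [show (8:ℝ)*u^2*v^2*(u^4+v^4) = (2*(u*v))^2 * (2*((u^2)^2+(v^2)^2)) by ring,
      Real.sqrt_mul (sq_nonneg _), Real.sqrt_sq (by positivity)]
  calc 2*(u*v) * Real.sqrt (2*((u^2)^2+(v^2)^2))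
      = Real.sqrt (8*u^2*v^2*(u^4+v^4)) := h1
    _ ≤ Real.sqrt ((3*u*v*(u^2+v^2) + v^4/2 - u^2*v^2)^2) :=
        Real.sqrt_le_sqrt (key_poly' u v hu hv)
    _ = 3*u*v*(u^2+v^2) + v^4/2 - u^2*v^2 := Real.sqrt_sq (key_L_nonneg' u v hu hv)
    _ = (v^2)^2/2 - u^2*v^2 + 3*(u*v)*(u^2+v^2) := by ring

/-- Membership in the probability simplex. -/
def InSimplex (d : ℝ × ℝ × ℝ) : Prop :=
  0 ≤ d.1 ∧ 0 ≤ d.2.1 ∧ 0 ≤ d.2.2 ∧ d.1 + d.2.1 + d.2.2 = 1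

lemma vplus_mem {d : ℝ × ℝ × ℝ} (h : InSimplex d) : InSimplex (vplus d) := by
  obtain ⟨p, e, m⟩ := d; obtain ⟨hp, he, hm, hsum⟩ := h
  simp only at hp he hm hsum
  simp only [vplus, InSimplex]
  refine ⟨by positivity, by positivity, by positivity, by nlinarith [hsum]⟩

lemma vminus_mem {d : ℝ × ℝ × ℝ} (h : InSimplex d) : InSimplex (vminus d) := by
  obtain ⟨p, e, m⟩ := d; obtain ⟨hp, he, hm, hsum⟩ := h
  simp only at hp he hm hsum
  simp only [vminus, InSimplex]
  refine ⟨by positivity, by nlinarith [he, hsum], by positivity, by nlinarith [hsum]⟩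

lemma Fpot_bound {d : ℝ × ℝ × ℝ} (h : InSimplex d) : ‖Fpot d‖ ≤ 5 := by
  obtain ⟨p, e, m⟩ := d; obtain ⟨hp, he, hm, hsum⟩ := h
  simp only at hp he hm hsum
  have h1 : Real.sqrt (p*m) ≤ 1 := by
    rw [show (1:ℝ) = Real.sqrt 1 by simp]
    exact Real.sqrt_le_sqrt (by nlinarith)
  have h0 : (0:ℝ) ≤ Real.sqrt (p*m) := Real.sqrt_nonneg _
  simp only [Fpot, Real.norm_eq_abs]
  rw [abs_le]; constructor <;> nlinarith

lemma Fpot_measurable : Measurable Fpot := by unfold Fpot; fun_prop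
lemma vplus_measurable : Measurable vplus := by unfold vplus; fun_prop
lemma vminus_measurable : Measurable vminus := by unfold vminus; fun_prop

lemma main_ineq (d : ℝ × ℝ × ℝ) (h : InSimplex d) :
    Fpot d ≤ 2⁻¹ * Fpot (vplus d) + 2⁻¹ * Fpot (vminus d) := by
  obtain ⟨p, e, m⟩ := d
  obtain ⟨hp, he, hm, hsum⟩ := h
  simp only at hp he hm hsum
  have hpm1 : p + m ≤ 1 := by linarith
  have hs : (0:ℝ) ≤ Real.sqrt (p*m) := Real.sqrt_nonneg _
  simp only [Fpot, vplus, vminus]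
  have h1 : Real.sqrt ((p^2 + 2*p*e) * (m^2 + 2*e*m))
      = Real.sqrt (p*m) * Real.sqrt ((p+2*e)*(m+2*e)) := by
    rw [show (p^2 + 2*p*e) * (m^2 + 2*e*m) = (p*m)*((p+2*e)*(m+2*e)) by ring,
      Real.sqrt_mul (by positivity)]
  have h2 : Real.sqrt ((p^2 + m^2) * (2*p*m))
      = Real.sqrt (p*m) * Real.sqrt (2*(p^2+m^2)) := by
    rw [show (p^2 + m^2) * (2*p*m) = (p*m)*(2*(p^2+m^2)) by ring,
      Real.sqrt_mul (by positivity)]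
  have hA : Real.sqrt ((p+2*e)*(m+2*e)) ≤ 2 - (3/2)*(p+m) := by
    have h3 : (p+2*e)*(m+2*e) ≤ (2 - (3/2)*(p+m))^2 := by nlinarith [sq_nonneg (p-m)]
    calc Real.sqrt ((p+2*e)*(m+2*e)) ≤ Real.sqrt ((2 - (3/2)*(p+m))^2) :=
          Real.sqrt_le_sqrt h3
      _ = 2 - (3/2)*(p+m) := Real.sqrt_sq (by linarith)
  have hB := key2' p m hp hm
  have hAs : Real.sqrt (p*m) * Real.sqrt ((p+2*e)*(m+2*e))
      ≤ Real.sqrt (p*m) * (2 - (3/2)*(p+m)) := mul_le_mul_of_nonneg_left hA hs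
  simp only [h1, h2]
  nlinarith [hAs, hB]

/-- The deterministic evolution function: applies the transforms driven by a bit sequence. -/
def phiD (d₀ : ℝ × ℝ × ℝ) : ℕ → (ℕ → Bool) → ℝ × ℝ × ℝ
  | 0, _ => d₀
  | (n+1), b => if b n then vplus (phiD d₀ n b) else vminus (phiD d₀ n b)

lemma phiD_congr (d₀ : ℝ × ℝ × ℝ) (n : ℕ) {b c : ℕ → Bool} (h : ∀ i < n, b i = c i) :
    phiD d₀ n b = phiD d₀ n c := by
  induction n with
  | zero => rfl
  | succ n ih =>
    simp only [phiD, ih (fun i hi => h i (Nat.lt_succ_of_lt hi)),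
      h n (Nat.lt_succ_self n)]

lemma phiD_zero (d₀ : ℝ × ℝ × ℝ) (b : ℕ → Bool) : phiD d₀ 0 b = d₀ := rfl

lemma phiD_succ (d₀ : ℝ × ℝ × ℝ) (n : ℕ) (b : ℕ → Bool) :
    phiD d₀ (n+1) b = if b n then vplus (phiD d₀ n b) else vminus (phiD d₀ n b) := rfl

/-- The potential process `F_n = p_n - 4√(p_n m_n)` of the quantized polarization
process is a submartingale: `E[F_{n+1} | D_n] ≥ F_n` almost surely. -/
theorem stmt_12 {Ω : Type*} [MeasurableSpace Ω] (μ : Measure Ω) [IsProbabilityMeasure μ]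
    (B : ℕ → Ω → Bool) (D : ℕ → Ω → ℝ × ℝ × ℝ) (d₀ : ℝ × ℝ × ℝ)
    (hBmeas : ∀ n, Measurable (B n))
    (hBindep : iIndepFun B μ)
    (hBfair : ∀ n, μ {ω | B n ω = true} = 1/2)
    (hd₀ : 0 ≤ d₀.1 ∧ 0 ≤ d₀.2.1 ∧ 0 ≤ d₀.2.2 ∧ d₀.1 + d₀.2.1 + d₀.2.2 = 1)
    (hD0 : ∀ ω, D 0 ω = d₀)
    (hstep : ∀ n ω, D (n+1) ω = if B n ω then vplus (D n ω) else vminus (D n ω)) :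
    ∀ n, (fun ω => Fpot (D n ω))
      ≤ᵐ[μ] μ[(fun ω => Fpot (D (n+1) ω)) | MeasurableSpace.comap (D n) inferInstance] := by
  intro n
  -- measurability of D
  have hDmeas : ∀ k, Measurable (D k) := by
    intro k; induction k with
    | zero =>
      have h0 : D 0 = fun _ => d₀ := funext hD0
      rw [h0]; exact measurable_const
    | succ k ih =>
      have h1 : D (k+1) = fun ω => if B k ω = true then vplus (D k ω) else vminus (D k ω) :=
        funext fun ω => hstep k ω
      rw [h1]
      exact Measurable.ite ((hBmeas k) (measurableSet_singleton true))
        (vplus_measurable.comp ih) (vminus_measurable.comp ih)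
  -- simplex invariance
  have hsimplex : ∀ k ω, InSimplex (D k ω) := by
    intro k; induction k with
    | zero => intro ω; rw [hD0]; exact hd₀
    | succ k ih =>
      intro ω
      rw [hstep k ω]
      by_cases hb : B k ω = true
      · simp only [hb, if_true]; exact vplus_mem (ih ω)
      · simp only [Bool.not_eq_true] at hb; simp only [hb]
        exact vminus_mem (ih ω)
  -- integrability of Fpot ∘ D k
  have hFint : ∀ k, Integrable (fun ω => Fpot (D k ω)) μ := fun k =>
    (integrable_const (5:ℝ)).mono' (Fpot_measurable.comp (hDmeas k)).aestronglyMeasurable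
      (Filter.Eventually.of_forall fun ω => Fpot_bound (hsimplex k ω))
  -- representation of D n as a function of B 0, ..., B (n-1)
  have hDrep : ∀ k ω, D k ω = phiD d₀ k (fun i => B i ω) := by
    intro k; induction k with
    | zero => intro ω; rw [hD0, phiD_zero]
    | succ k ih => intro ω; rw [hstep k ω, phiD_succ, ih ω]
  -- independence of D n and B n
  have hindep : IndepFun (D n) (B n) μ := by
    have h := hBindep.indepFun_finset (Finset.range n) {n}
      (by simp) hBmeas
    set g : (↥(Finset.range n) → Bool) → ℝ × ℝ × ℝ := fun b =>
      phiD d₀ n (fun i => if h : i ∈ Finset.range n then b ⟨i, h⟩ else false) with hg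
    set g' : (↥({n} : Finset ℕ) → Bool) → Bool := fun b => b ⟨n, Finset.mem_singleton_self n⟩
      with hg'
    have h2 := h.comp (measurable_of_finite g) (measurable_of_finite g')
    have e1 : (g ∘ fun ω (i : ↥(Finset.range n)) => B i ω) = D n := by
      funext ω
      simp only [Function.comp_apply, hg]
      rw [hDrep n ω]
      exact phiD_congr d₀ n (fun i hi => by simp [Finset.mem_range.mpr hi])
    have e2 : (g' ∘ fun ω (i : ↥({n} : Finset ℕ)) => B i ω) = B n := rfl
    rwa [e1, e2] at h2
  -- conditional expectation computation
  have hm : MeasurableSpace.comap (D n) inferInstance ≤ (inferInstance : MeasurableSpace Ω) :=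
    (hDmeas n).comap_le
  haveI : SigmaFinite (μ.trim hm) := by infer_instance
  set φ : ℝ × ℝ × ℝ → ℝ := fun d => Fpot (vplus d) with hφdef
  set ψ : ℝ × ℝ × ℝ → ℝ := fun d => Fpot (vminus d) with hψdef
  have hφm : Measurable φ := Fpot_measurable.comp vplus_measurable
  have hψm : Measurable ψ := Fpot_measurable.comp vminus_measurable
  have hφb : ∀ ω, ‖φ (D n ω)‖ ≤ 5 := fun ω => Fpot_bound (vplus_mem (hsimplex n ω))
  have hψb : ∀ ω, ‖ψ (D n ω)‖ ≤ 5 := fun ω => Fpot_bound (vminus_mem (hsimplex n ω))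
  have hφint : Integrable (fun ω => φ (D n ω)) μ :=
    (integrable_const (5:ℝ)).mono' (hφm.comp (hDmeas n)).aestronglyMeasurable
      (Filter.Eventually.of_forall hφb)
  have hψint : Integrable (fun ω => ψ (D n ω)) μ :=
    (integrable_const (5:ℝ)).mono' (hψm.comp (hDmeas n)).aestronglyMeasurable
      (Filter.Eventually.of_forall hψb)
  set cand : Ω → ℝ := fun ω => 2⁻¹ * φ (D n ω) + 2⁻¹ * ψ (D n ω) with hcanddef
  have hcint : Integrable cand μ := (hφint.const_mul _).add (hψint.const_mul _)
  -- the ±1 indicator functions of the driving bit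
  set χ : Ω → ℝ := fun ω => if B n ω = true then 1 else 0 with hχdef
  set χ' : Ω → ℝ := fun ω => if B n ω = true then 0 else 1 with hχ'def
  have hχm : Measurable χ :=
    Measurable.ite ((hBmeas n) (measurableSet_singleton true)) measurable_const measurable_const
  have hχ'm : Measurable χ' :=
    Measurable.ite ((hBmeas n) (measurableSet_singleton true)) measurable_const measurable_const
  have hχb : ∀ ω, ‖χ ω‖ ≤ 1 := fun ω => by
    by_cases h : B n ω = true <;> simp [hχdef, h]
  have hχ'b : ∀ ω, ‖χ' ω‖ ≤ 1 := fun ω => by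
    by_cases h : B n ω = true <;> simp [hχ'def, h]
  have hχint : Integrable χ μ :=
    (integrable_const (1:ℝ)).mono' hχm.aestronglyMeasurable (Filter.Eventually.of_forall hχb)
  have hχ'int : Integrable χ' μ :=
    (integrable_const (1:ℝ)).mono' hχ'm.aestronglyMeasurable (Filter.Eventually.of_forall hχ'b)
  have hχval : ∫ ω, χ ω ∂μ = 2⁻¹ := by
    have h1 : χ = Set.indicator {ω | B n ω = true} (fun _ => (1:ℝ)) := by
      funext ω; by_cases h : B n ω = true <;> simp [hχdef, Set.indicator, h]
    have hmeas : MeasurableSet {ω | B n ω = true} := (hBmeas n) (measurableSet_singleton true)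
    rw [h1, integral_indicator_const _ hmeas, measureReal_def, hBfair n]
    simp [ENNReal.toReal_div]
  have hχ'val : ∫ ω, χ' ω ∂μ = 2⁻¹ := by
    have h1 : χ' = fun ω => 1 - χ ω := by
      funext ω; by_cases h : B n ω = true <;> simp [hχdef, hχ'def, h]
    rw [h1, integral_sub (integrable_const 1) hχint, hχval, integral_const]
    norm_num
  -- independence of the bit indicators from functions of D n
  have hindmul : ∀ (f : ℝ × ℝ × ℝ → ℝ), Measurable f → ∀ (c : Bool → ℝ),
      IndepFun (fun ω => c (B n ω)) (fun ω => f (D n ω)) μ := by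
    intro f hf c
    exact (hindep.symm.comp (measurable_of_finite c) hf)
  -- candidate is m'-measurable
  have hDm' : Measurable[MeasurableSpace.comap (D n) inferInstance] (D n) := fun t ht => ⟨t, ht, rfl⟩
  have hcand_meas' : AEStronglyMeasurable[MeasurableSpace.comap (D n) inferInstance] cand μ := by
    have hmc : Measurable[MeasurableSpace.comap (D n) inferInstance] cand :=
      ((hφm.comp hDm').const_mul _).add ((hψm.comp hDm').const_mul _)
    exact hmc.stronglyMeasurable.aestronglyMeasurable
  -- identification of the conditional expectation
  have heq : cand =ᵐ[μ] μ[(fun ω => Fpot (D (n+1) ω)) | MeasurableSpace.comap (D n) inferInstance] := by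
    refine ae_eq_condExp_of_forall_setIntegral_eq hm (hFint (n+1))
      (fun s _ _ => hcint.integrableOn) ?_ hcand_meas'
    rintro s ⟨t, ht, rfl⟩ -
    have hs : MeasurableSet (D n ⁻¹' t) := hDmeas n ht
    -- integrability of indicator compositions
    have hΦm : Measurable (t.indicator φ) := hφm.indicator ht
    have hΨm : Measurable (t.indicator ψ) := hψm.indicator ht
    have hΦb : ∀ ω, ‖t.indicator φ (D n ω)‖ ≤ 5 := fun ω =>
      le_trans (norm_indicator_le_norm_self _ _) (hφb ω)
    have hΨb : ∀ ω, ‖t.indicator ψ (D n ω)‖ ≤ 5 := fun ω =>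
      le_trans (norm_indicator_le_norm_self _ _) (hψb ω)
    have hΦint : Integrable (fun ω => t.indicator φ (D n ω)) μ :=
      (integrable_const (5:ℝ)).mono' ((hΦm.comp (hDmeas n)).aestronglyMeasurable)
        (Filter.Eventually.of_forall hΦb)
    have hΨint : Integrable (fun ω => t.indicator ψ (D n ω)) μ :=
      (integrable_const (5:ℝ)).mono' ((hΨm.comp (hDmeas n)).aestronglyMeasurable)
        (Filter.Eventually.of_forall hΨb)
    have hprod1 : Integrable (fun ω => χ ω * t.indicator φ (D n ω)) μ :=
      (integrable_const (5:ℝ)).mono'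
        (hχm.mul (hΦm.comp (hDmeas n))).aestronglyMeasurable
        (Filter.Eventually.of_forall fun ω => by
          rw [norm_mul]
          calc ‖χ ω‖ * ‖t.indicator φ (D n ω)‖ ≤ 1 * 5 :=
            mul_le_mul (hχb ω) (hΦb ω) (norm_nonneg _) zero_le_one
          _ = 5 := one_mul 5)
    have hprod2 : Integrable (fun ω => χ' ω * t.indicator ψ (D n ω)) μ :=
      (integrable_const (5:ℝ)).mono'
        (hχ'm.mul (hΨm.comp (hDmeas n))).aestronglyMeasurable
        (Filter.Eventually.of_forall fun ω => by
          rw [norm_mul]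
          calc ‖χ' ω‖ * ‖t.indicator ψ (D n ω)‖ ≤ 1 * 5 :=
            mul_le_mul (hχ'b ω) (hΨb ω) (norm_nonneg _) zero_le_one
          _ = 5 := one_mul 5)
    -- pointwise decomposition of the indicator of the (n+1)-st potential
    have hptw : ∀ x, Set.indicator (D n ⁻¹' t) (fun x => Fpot (D (n+1) x)) x
        = χ x * t.indicator φ (D n x) + χ' x * t.indicator ψ (D n x) := by
      intro x
      classical
      rw [Set.indicator_apply]
      by_cases hx : D n x ∈ t <;> by_cases hb : B n x = true <;>
        simp [hx, hb, hstep n x, hχdef, hχ'def, Set.indicator_apply, hφdef, hψdef]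
    -- independence-based factorization
    have hind1 : IndepFun χ (fun ω => t.indicator φ (D n ω)) μ := by
      have := hindmul (t.indicator φ) hΦm (fun b => if b = true then (1:ℝ) else 0)
      exact this
    have hind2 : IndepFun χ' (fun ω => t.indicator ψ (D n ω)) μ := by
      have := hindmul (t.indicator ψ) hΨm (fun b => if b = true then (0:ℝ) else 1)
      exact this
    have hmul1 : ∫ ω, χ ω * t.indicator φ (D n ω) ∂μ
        = (∫ ω, χ ω ∂μ) * ∫ ω, t.indicator φ (D n ω) ∂μ :=
      hind1.integral_fun_mul_eq_mul_integral hχint.1 hΦint.1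
    have hmul2 : ∫ ω, χ' ω * t.indicator ψ (D n ω) ∂μ
        = (∫ ω, χ' ω ∂μ) * ∫ ω, t.indicator ψ (D n ω) ∂μ :=
      hind2.integral_fun_mul_eq_mul_integral hχ'int.1 hΨint.1
    -- convert indicator integrals to set integrals
    have hconv : ∀ (f : ℝ × ℝ × ℝ → ℝ),
        (∫ ω, t.indicator f (D n ω) ∂μ) = ∫ ω in D n ⁻¹' t, f (D n ω) ∂μ := by
      intro f
      rw [← integral_indicator hs]
      refine integral_congr_ae (Filter.Eventually.of_forall fun x => ?_)
      exact (Set.indicator_comp_right (D n) (s := t) (g := f) (x := x)).symm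
    -- put everything together
    calc ∫ x in D n ⁻¹' t, cand x ∂μ
        = ∫ x in D n ⁻¹' t, (2⁻¹ * φ (D n x) + 2⁻¹ * ψ (D n x)) ∂μ := rfl
      _ = (∫ x in D n ⁻¹' t, 2⁻¹ * φ (D n x) ∂μ) + ∫ x in D n ⁻¹' t, 2⁻¹ * ψ (D n x) ∂μ :=
          integral_add ((hφint.const_mul _).integrableOn) ((hψint.const_mul _).integrableOn)
      _ = 2⁻¹ * (∫ x in D n ⁻¹' t, φ (D n x) ∂μ) + 2⁻¹ * ∫ x in D n ⁻¹' t, ψ (D n x) ∂μ := by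
          rw [integral_const_mul, integral_const_mul]
      _ = 2⁻¹ * (∫ ω, t.indicator φ (D n ω) ∂μ) + 2⁻¹ * ∫ ω, t.indicator ψ (D n ω) ∂μ := by
          rw [hconv φ, hconv ψ]
      _ = (∫ ω, χ ω ∂μ) * (∫ ω, t.indicator φ (D n ω) ∂μ)
            + (∫ ω, χ' ω ∂μ) * ∫ ω, t.indicator ψ (D n ω) ∂μ := by
          rw [hχval, hχ'val]
      _ = (∫ ω, χ ω * t.indicator φ (D n ω) ∂μ) + ∫ ω, χ' ω * t.indicator ψ (D n ω) ∂μ := by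
          rw [hmul1, hmul2]
      _ = ∫ ω, (χ ω * t.indicator φ (D n ω) + χ' ω * t.indicator ψ (D n ω)) ∂μ :=
          (integral_add hprod1 hprod2).symm
      _ = ∫ x, Set.indicator (D n ⁻¹' t) (fun x => Fpot (D (n+1) x)) x ∂μ := by
          exact integral_congr_ae (Filter.Eventually.of_forall fun x => (hptw x).symm)
      _ = ∫ x in D n ⁻¹' t, Fpot (D (n+1) x) ∂μ := integral_indicator hs
  -- conclude
  filter_upwards [heq] with ω hω
  rw [← hω]
  exact main_ineq _ (hsimplex n ω)
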